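/- Let L be a well-rounded lattice in ℝⁿ with a weakly nearly orthogonal ordered basis B = (b₁,…,bₙ). Then for each 1 ≤ k ≤ n the sublattice L_k = span_ℤ{b₁,…,b_k} is well-rounded, i.e., the minimal vectors of L_k span the real subspace span_ℝ{b₁,…,b_k}. -/

import Mathlib

open scoped RealInnerProductSpace
open Submodule Metric MeasureTheory

noncomputable section

abbrev Evec (n : ℕ) := EuclideanSpace ℝ (Fin n)

/-- The lattice generated (over ℤ) by the vectors `b 0, …, b (n-1)`. -/
def latticeOf {n : ℕ} (b : Fin n → Evec n) : Set (Evec n) :=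
  {x | ∃ c : Fin n → ℤ, x = ∑ i, (c i : ℝ) • b i}

/-- The set of minimal vectors `S(L)` of a lattice `L`. -/
def minVecs {n : ℕ} (L : Set (Evec n)) : Set (Evec n) :=
  {x | x ∈ L ∧ x ≠ 0 ∧ ∀ y ∈ L, y ≠ 0 → ‖x‖ ≤ ‖y‖}

/-- `L` is well-rounded: its minimal vectors span `ℝⁿ`. -/
def IsWellRounded {n : ℕ} (L : Set (Evec n)) : Prop :=
  Submodule.span ℝ (minVecs L) = ⊤

/-- `L` has minimal norm `m`. -/
def hasMinNorm {n : ℕ} (L : Set (Evec n)) (m : ℝ) : Prop :=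
  (∃ x ∈ L, x ≠ 0 ∧ ‖x‖ = m) ∧ ∀ x ∈ L, x ≠ 0 → m ≤ ‖x‖

/-- The angle in `[0, π/2]` between a vector `v` and a subspace `V`,
whose cosine is `‖proj_V v‖ / ‖v‖`. -/
def subAngle {n : ℕ} (v : Evec n) (V : Submodule ℝ (Evec n)) : ℝ :=
  Real.arccos (‖(orthogonalProjection V v : Evec n)‖ / ‖v‖)

/-- The ordered basis `b` is weakly θ-orthogonal. -/
def WeaklyOrth {n : ℕ} (θ : ℝ) (b : Fin n → Evec n) : Prop :=
  ∀ i : Fin n, 0 < (i : ℕ) →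
    θ ≤ subAngle (b i) (Submodule.span ℝ (b '' {j | j < i}))

/-- The basis `b` is θ-orthogonal: every ordering of it is weakly θ-orthogonal. -/
def Orth {n : ℕ} (θ : ℝ) (b : Fin n → Evec n) : Prop :=
  ∀ σ : Equiv.Perm (Fin n), WeaklyOrth θ (b ∘ σ)

/-- A nearly orthogonal basis is a π/3-orthogonal basis. -/
def NearlyOrth {n : ℕ} (b : Fin n → Evec n) : Prop := Orth (Real.pi / 3) b

/-- A weakly nearly orthogonal basis is a weakly π/3-orthogonal basis. -/
def WeaklyNearlyOrth {n : ℕ} (b : Fin n → Evec n) : Prop := WeaklyOrth (Real.pi / 3) b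

/-- Coherence `C(L)` of a lattice. -/
def coherence {n : ℕ} (L : Set (Evec n)) : ℝ :=
  sSup {t | ∃ x ∈ minVecs L, ∃ y ∈ minVecs L, x ≠ y ∧ x ≠ -y ∧
    t = abs ⟪x, y⟫ / (‖x‖ * ‖y‖)}

/-- `μ(B)`: minimal absolute cosine of angles between distinct basis vectors. -/
def muB {n : ℕ} (b : Fin n → Evec n) : ℝ :=
  sInf {t | ∃ i j : Fin n, i ≠ j ∧ t = abs ⟪b i, b j⟫ / (‖b i‖ * ‖b j‖)}

/-- `ν(B)`: maximal absolute cosine of angles between distinct basis vectors. -/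
def nuB {n : ℕ} (b : Fin n → Evec n) : ℝ :=
  sSup {t | ∃ i j : Fin n, i ≠ j ∧ t = abs ⟪b i, b j⟫ / (‖b i‖ * ‖b j‖)}

/-- The determinant of the lattice with basis `b`. -/
def latDet {n : ℕ} (b : Fin n → Evec n) : ℝ :=
  |(Matrix.of fun i j : Fin n => b j i).det|

/-- Packing density of a lattice with basis `b` and minimal norm `m`:
`ω_n · m^n / (2^n · det L)`. -/
def packDensity {n : ℕ} (m : ℝ) (b : Fin n → Evec n) : ℝ :=
  (volume (ball (0 : Evec n) 1)).toReal * m ^ n / (2 ^ n * latDet b)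

/-- `L` is strongly eutactic. -/
def StronglyEutactic {n : ℕ} (L : Set (Evec n)) : Prop :=
  ∃ c : ℝ, 0 < c ∧ ∀ v : Evec n, ‖v‖ ^ 2 = c * ∑ᶠ x ∈ minVecs L, ⟪v, x⟫ ^ 2

/-- `L` is perfect: `{x xᵀ : x ∈ S(L)}` spans the symmetric `n × n` matrices. -/
def IsPerfect {n : ℕ} (L : Set (Evec n)) : Prop :=
  ∀ A : Matrix (Fin n) (Fin n) ℝ, A.IsSymm →
    A ∈ Submodule.span ℝ ((fun x : Evec n => Matrix.of fun i j => x i * x j) '' minVecs L)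

end

lemma single_sum {n : ℕ} (b : Fin n → Evec n) (i : Fin n) :
    b i = ∑ j, (((if j = i then 1 else 0 : ℤ) : ℝ)) • b j := by
  rw [Finset.sum_eq_single i]
  · simp
  · intro j _ hj; simp [hj]
  · intro h; exact absurd (Finset.mem_univ i) h

lemma bmem_lattice {n : ℕ} (b : Fin n → Evec n) (i : Fin n) :
    b i ∈ latticeOf b :=
  ⟨fun j => if j = i then 1 else 0, single_sum b i⟩


lemma arith_c2 {m A C Q s : ℝ} (hm0 : 0 < m) (hxsq : m^2 = A^2 + C^2 * Q^2)
    (hQc : C^2 * (3/4 * s^2) ≤ C^2 * Q^2) (hms : C^2 * m^2 ≤ C^2 * s^2)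
    (hA : 0 ≤ A) : C^2 ≤ 4/3 := by nlinarith [mul_pos hm0 hm0, sq_nonneg A, sq_nonneg C]

lemma arith_ms2 {m A s : ℝ} (hm0 : 0 < m) (hs : 0 ≤ s)
    (hA2 : A^2 ≤ m^2 - 3/4 * s^2) (hA : 0 ≤ A) : 0 ≤ m - s/2 := by
  nlinarith [sq_nonneg A]

lemma arith_Ale {m A s : ℝ} (hm0 : 0 < m) (hsge : m ≤ s) (hs : 0 ≤ s)
    (hA2 : A^2 ≤ m^2 - 3/4 * s^2) : A^2 ≤ (m - s/2)^2 := by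
  nlinarith [mul_le_mul_of_nonneg_left hsge hs]

lemma arith_sm {m A s : ℝ} (hm0 : 0 < m) (hspos : 0 < s)
    (h2 : (m - s/2)^2 ≤ A^2) (hA2 : A^2 ≤ m^2 - 3/4 * s^2) : s ≤ m := by
  nlinarith

set_option maxHeartbeats 2000000 in
lemma key_span {n : ℕ} (b : Fin n → Evec n) (hb : LinearIndependent ℝ b)
    (hWNO : WeaklyNearlyOrth b) (m : ℝ) (hm0 : 0 < m)
    (hmin : ∀ y ∈ latticeOf b, y ≠ 0 → m ≤ ‖y‖) :
    ∀ t : ℕ, ∀ c : Fin n → ℤ, (∀ i : Fin n, t ≤ (i : ℕ) → c i = 0) →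
      ‖∑ i, (c i : ℝ) • b i‖ = m →
      (∑ i, (c i : ℝ) • b i) ∈ Submodule.span ℝ (b '' {i : Fin n | ‖b i‖ = m}) := by
  classical
  intro t
  induction t using Nat.strong_induction_on with
  | _ t IH =>
    intro c hc hx
    have hcex : ∃ i, c i ≠ 0 := by
      by_contra h
      push_neg at h
      have h0 : (∑ i, (c i : ℝ) • b i) = 0 := by simp [h]
      rw [h0, norm_zero] at hx
      exact hm0.ne' hx.symm
    set F : Finset (Fin n) := Finset.univ.filter fun i => c i ≠ 0 with hFdef
    have hFne : F.Nonempty := ⟨hcex.choose, by simp [hFdef, hcex.choose_spec]⟩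
    set t' : Fin n := F.max' hFne with ht'def
    have hct' : c t' ≠ 0 := by have := F.max'_mem hFne; simpa [hFdef] using this
    have htop : ∀ i : Fin n, t' < i → c i = 0 := by
      intro i hi
      by_contra h
      exact absurd (F.le_max' i (by simp [hFdef, h])) (not_le.mpr hi)
    have ht'lt : (t' : ℕ) < t := by
      by_contra h
      exact hct' (hc t' (not_lt.mp h))
    set c' : Fin n → ℤ := fun i => if i < t' then c i else 0 with hc'def
    set u : Evec n := ∑ i, (c' i : ℝ) • b i with hudef
    have hsplit : (∑ i, (c i : ℝ) • b i) = u + (c t' : ℝ) • b t' := by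
      rw [hudef]
      have h1 : ∀ i ∈ Finset.univ, (c i : ℝ) • b i
          = (c' i : ℝ) • b i + (if i = t' then (c t' : ℝ) • b t' else 0) := by
        intro i _
        rcases lt_trichotomy i t' with h | h | h
        · simp [hc'def, h, ne_of_lt h]
        · subst h; simp [hc'def]
        · simp [hc'def, ne_of_gt h, not_lt.mpr h.le, htop i h]
      rw [Finset.sum_congr rfl h1, Finset.sum_add_distrib,
        Finset.sum_ite_eq' Finset.univ t' fun _ => (c t' : ℝ) • b t']
      simp
    set V : Submodule ℝ (Evec n) := Submodule.span ℝ (b '' {j : Fin n | j < t'}) with hVdef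
    set p : Evec n := (orthogonalProjection V (b t') : Evec n) with hpdef
    set q : Evec n := b t' - p with hqdef
    have hpV : p ∈ V := SetLike.coe_mem _
    have hqV : q ∈ Vᗮ := sub_starProjection_mem_orthogonal (K := V) (b t')
    have hpq : p + q = b t' := by rw [hqdef]; abel
    have hipq : ⟪p, q⟫ = 0 := (Submodule.mem_orthogonal V q).mp hqV p hpV
    have hbtne : b t' ≠ 0 := hb.ne_zero t'
    have hbpos : (0:ℝ) < ‖b t'‖ := norm_pos_iff.mpr hbtne
    have hpyth : ‖p‖^2 + ‖q‖^2 = ‖b t'‖^2 := by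
      rw [← hpq, norm_add_sq_real, hipq]; ring
    have hp2 : ‖p‖ ≤ ‖b t'‖ / 2 := by
      rcases Nat.eq_zero_or_pos (t' : ℕ) with h0 | h0
      · have hVbot : V = ⊥ := by
          rw [hVdef]
          have he : {j : Fin n | j < t'} = ∅ := by
            ext j; simp [Fin.lt_def, h0]
          rw [he, Set.image_empty, Submodule.span_empty]
        have hp0 : p = 0 := by
          rw [hVbot] at hpV
          simpa using hpV
        rw [hp0, norm_zero]; positivity
      · have hA := hWNO t' h0
        simp only [subAngle] at hA
        rw [← hVdef, ← hpdef] at hA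
        have hz1 : ‖p‖ / ‖b t'‖ ≤ 1 := by
          rw [div_le_one hbpos]
          nlinarith [sq_nonneg ‖q‖, norm_nonneg p]
        have hz0 : (0:ℝ) ≤ ‖p‖ / ‖b t'‖ := by positivity
        have hcc := Real.cos_le_cos_of_nonneg_of_le_pi (by positivity) (Real.arccos_le_pi _) hA
        rw [Real.cos_arccos (by linarith) hz1, Real.cos_pi_div_three] at hcc
        rw [div_le_iff₀ hbpos] at hcc
        linarith
    have hq2 : 3/4 * ‖b t'‖^2 ≤ ‖q‖^2 := by
      nlinarith [norm_nonneg p, norm_nonneg (b t')]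
    have huV : u ∈ V := by
      rw [hudef]
      refine Submodule.sum_mem _ fun i _ => ?_
      by_cases h : i < t'
      · exact Submodule.smul_mem _ _ (Submodule.subset_span ⟨i, h, rfl⟩)
      · simp [hc'def, h]
    set a : Evec n := u + (c t' : ℝ) • p with hadef
    set w : Evec n := (c t' : ℝ) • q with hwdef
    have haV : a ∈ V := add_mem huV (Submodule.smul_mem _ _ hpV)
    have hwV : w ∈ Vᗮ := Submodule.smul_mem _ _ hqV
    have hiaw : ⟪a, w⟫ = 0 := (Submodule.mem_orthogonal V w).mp hwV a haV
    have hxaw : (∑ i, (c i : ℝ) • b i) = a + w := by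
      rw [hsplit, hadef, hwdef, ← hpq, smul_add]; abel
    have hxsq : m^2 = ‖a‖^2 + (c t' : ℝ)^2 * ‖q‖^2 := by
      have h1 : ‖a + w‖^2 = ‖a‖^2 + ‖w‖^2 := by rw [norm_add_sq_real, hiaw]; ring
      have h2 : ‖w‖^2 = (c t' : ℝ)^2 * ‖q‖^2 := by
        rw [hwdef, norm_smul, Real.norm_eq_abs, mul_pow, sq_abs]
      rw [← hx, hxaw, h1, h2]
    have hsge : m ≤ ‖b t'‖ := hmin (b t') (bmem_lattice b t') hbtne
    have hc1 : (1:ℝ) ≤ (c t' : ℝ)^2 := by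
      have h1 : (1:ℤ) ≤ |c t'| := Int.one_le_abs hct'
      have h2 : (1:ℝ) ≤ |(c t' : ℝ)| := by exact_mod_cast h1
      have h3 : (1:ℝ)^2 ≤ |(c t' : ℝ)|^2 := pow_le_pow_left₀ (by norm_num) h2 2
      rwa [one_pow, sq_abs] at h3
    have hs2 : m^2 ≤ ‖b t'‖^2 := pow_le_pow_left₀ hm0.le hsge 2
    have hQc : (c t' : ℝ)^2 * (3/4 * ‖b t'‖^2) ≤ (c t' : ℝ)^2 * ‖q‖^2 :=
      mul_le_mul_of_nonneg_left hq2 (sq_nonneg _)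
    have hms : (c t' : ℝ)^2 * m^2 ≤ (c t' : ℝ)^2 * ‖b t'‖^2 :=
      mul_le_mul_of_nonneg_left hs2 (sq_nonneg _)
    have hcabs : |(c t' : ℝ)| = 1 := by
      have h43 : (c t' : ℝ)^2 ≤ 4/3 := arith_c2 hm0 hxsq hQc hms (norm_nonneg a)
      have h1 : (c t')^2 ≤ 1 := by
        by_contra h
        push_neg at h
        have h2 : (2:ℤ) ≤ (c t')^2 := by linarith
        have h3 : (2:ℝ) ≤ (c t' : ℝ)^2 := by exact_mod_cast h2
        linarith
      have h4 : (1:ℤ) ≤ |c t'| := Int.one_le_abs hct'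
      have h5 : |c t'| = 1 := by
        refine le_antisymm ?_ h4
        by_contra hh
        push_neg at hh
        have h7 : (2:ℤ) ≤ |c t'| := hh
        have h8 : (2:ℤ) * 2 ≤ |c t'| * |c t'| := mul_le_mul h7 h7 (by norm_num) (abs_nonneg _)
        rw [abs_mul_abs_self, ← pow_two] at h8
        linarith
      have h6 : ((|c t'| : ℤ) : ℝ) = 1 := by exact_mod_cast h5
      rwa [Int.cast_abs] at h6
    have hA2 : ‖a‖^2 ≤ m^2 - 3/4 * ‖b t'‖^2 := by
      have h1 : ‖q‖^2 ≤ (c t' : ℝ)^2 * ‖q‖^2 := le_mul_of_one_le_left (sq_nonneg _) hc1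
      linarith
    have hms2 : (0:ℝ) ≤ m - ‖b t'‖/2 := arith_ms2 hm0 (norm_nonneg _) hA2 (norm_nonneg a)
    have hAle : ‖a‖ ≤ m - ‖b t'‖/2 := by
      have h1 : ‖a‖^2 ≤ (m - ‖b t'‖/2)^2 := arith_Ale hm0 hsge (norm_nonneg _) hA2
      calc ‖a‖ = Real.sqrt (‖a‖^2) := (Real.sqrt_sq (norm_nonneg a)).symm
        _ ≤ Real.sqrt ((m - ‖b t'‖/2)^2) := Real.sqrt_le_sqrt h1
        _ = m - ‖b t'‖/2 := Real.sqrt_sq hms2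
    have hup : u = a - (c t' : ℝ) • p := by rw [hadef]; abel
    have hupn : ‖u‖ ≤ ‖a‖ + ‖p‖ := by
      rw [hup]
      calc ‖a - (c t' : ℝ) • p‖ ≤ ‖a‖ + ‖(c t' : ℝ) • p‖ := norm_sub_le _ _
        _ = ‖a‖ + ‖p‖ := by rw [norm_smul, Real.norm_eq_abs, hcabs, one_mul]
    have hunorm : ‖u‖ ≤ m := by linarith
    have hc'sup : ∀ i : Fin n, (t' : ℕ) ≤ (i : ℕ) → c' i = 0 := by
      intro i hi
      have hnot : ¬ i < t' := by rw [Fin.lt_def]; omega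
      simp [hc'def, hnot]
    have hbsub : ‖b t'‖ = m → b t' ∈ Submodule.span ℝ (b '' {i : Fin n | ‖b i‖ = m}) :=
      fun h => Submodule.subset_span ⟨t', h, rfl⟩
    rw [hsplit]
    by_cases hu0 : u = 0
    · have hsm : ‖b t'‖ = m := by
        rw [hsplit, hu0, zero_add, norm_smul, Real.norm_eq_abs, hcabs, one_mul] at hx
        exact hx
      rw [hu0, zero_add]
      exact Submodule.smul_mem _ _ (hbsub hsm)
    · have hum : ‖u‖ = m := le_antisymm hunorm (hmin u ⟨c', hudef⟩ hu0)
      have hage : m - ‖b t'‖/2 ≤ ‖a‖ := by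
        rw [hum] at hupn
        linarith
      have hsm : ‖b t'‖ = m := by
        have h2 : (m - ‖b t'‖/2)^2 ≤ ‖a‖^2 := pow_le_pow_left₀ hms2 hage 2
        have h3 : ‖b t'‖ ≤ m := arith_sm hm0 hbpos h2 hA2
        linarith
      exact add_mem (IH (t' : ℕ) ht'lt c' hc'sup hum) (Submodule.smul_mem _ _ (hbsub hsm))


set_option maxHeartbeats 1000000 in
theorem stmt_2 {n : ℕ} (b : Fin n → Evec n) (hb : LinearIndependent ℝ b)
    (hWNO : WeaklyNearlyOrth b) (hWR : IsWellRounded (latticeOf b))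
    (k : ℕ) (hk1 : 1 ≤ k) (hkn : k ≤ n) :
    Submodule.span ℝ
      (minVecs {x | ∃ c : Fin n → ℤ, (∀ i : Fin n, k ≤ (i : ℕ) → c i = 0) ∧
        x = ∑ i, (c i : ℝ) • b i}) =
    Submodule.span ℝ (b '' {i | (i : ℕ) < k}) := by
  classical
  have hn0 : 0 < n := lt_of_lt_of_le hk1 hkn
  have hne : (minVecs (latticeOf b)).Nonempty := by
    by_contra h
    rw [Set.not_nonempty_iff_eq_empty] at h
    rw [IsWellRounded, h, Submodule.span_empty] at hWR
    have hmem : b ⟨0, hn0⟩ ∈ (⊥ : Submodule ℝ (Evec n)) := by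
      rw [hWR]; exact Submodule.mem_top
    exact hb.ne_zero ⟨0, hn0⟩ (by simpa using hmem)
  obtain ⟨x₀, hx₀⟩ := hne
  simp only [minVecs, Set.mem_setOf_eq] at hx₀
  obtain ⟨hx₀L, hx₀ne, hx₀min⟩ := hx₀
  set m := ‖x₀‖ with hmdef
  have hm0 : 0 < m := norm_pos_iff.mpr hx₀ne
  have hmin : ∀ y ∈ latticeOf b, y ≠ 0 → m ≤ ‖y‖ := hx₀min
  have hbm : ∀ i, ‖b i‖ = m := by
    have hspan : Submodule.span ℝ (b '' {i : Fin n | ‖b i‖ = m}) = ⊤ := by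
      rw [eq_top_iff, ← hWR]
      apply Submodule.span_le.mpr
      intro x hx
      simp only [minVecs, latticeOf, Set.mem_setOf_eq] at hx
      obtain ⟨⟨c, rfl⟩, hxne, hxm⟩ := hx
      exact key_span b hb hWNO m hm0 hmin n c (fun i hi => absurd hi (not_le.mpr i.isLt))
        (le_antisymm (hxm x₀ hx₀L hx₀ne) (hmin _ ⟨c, rfl⟩ hxne))
    intro i
    by_contra h
    have hni : i ∉ {i : Fin n | ‖b i‖ = m} := h
    have : b i ∈ Submodule.span ℝ (b '' {i : Fin n | ‖b i‖ = m}) := by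
      rw [hspan]; exact Submodule.mem_top
    exact hb.notMem_span_image hni this
  apply le_antisymm
  · apply Submodule.span_le.mpr
    intro x hx
    simp only [minVecs, Set.mem_setOf_eq] at hx
    obtain ⟨⟨c, hcz, rfl⟩, -, -⟩ := hx
    refine SetLike.mem_coe.mpr (Submodule.sum_mem _ fun i _ => ?_)
    by_cases h : (i : ℕ) < k
    · exact Submodule.smul_mem _ _ (Submodule.subset_span ⟨i, h, rfl⟩)
    · rw [hcz i (not_lt.mp h)]
      simp
  · apply Submodule.span_le.mpr
    rintro x ⟨i, hi, rfl⟩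
    refine SetLike.mem_coe.mpr (Submodule.subset_span ?_)
    simp only [minVecs, Set.mem_setOf_eq]
    refine ⟨⟨fun j => if j = i then 1 else 0, fun j hj => ?_, single_sum b i⟩,
      hb.ne_zero i, ?_⟩
    · have hji : j ≠ i := by
        intro he
        subst he
        exact absurd hi (not_lt.mpr hj)
      simp [hji]
    · intro y hy hyne
      rw [hbm i]
      obtain ⟨c, -, hc⟩ := hy
      exact hmin y ⟨c, hc⟩ hyne
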